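/- Let p ∈ (0,1) and ε ∈ (0,1). Let G be a k×n matrix over F₂ (k ≥ 1) every row of which has Hamming weight at most t, and let φ(x) = xᵀG be the associated linear encoding. Suppose t < ln(k²/(2n·ln(1/ε))) / (2·ln(1/p)). Then for every decoder ψ mapping a pair (I, restriction of the received codeword to I) to an element of F₂ᵏ, the average error probability of (φ, ψ) over BEC(p) is at least 1/2 − ε. -/

import Mathlib

open Real Finset

-- chord bound for exp on [-1,1]
lemma chord_exp {θ : ℝ} (h1 : -1 ≤ θ) (h2 : θ ≤ 1) (lam : ℝ) :
    Real.exp (lam * θ) ≤ (1 - θ)/2 * Real.exp (-lam) + (1 + θ)/2 * Real.exp lam := by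
  have := convexOn_exp.2 (Set.mem_univ (-lam)) (Set.mem_univ lam)
    (show (0:ℝ) ≤ (1 - θ)/2 by linarith) (show (0:ℝ) ≤ (1 + θ)/2 by linarith)
    (show (1 - θ)/2 + (1 + θ)/2 = 1 by ring)
  have he : (1 - θ)/2 * (-lam) + (1 + θ)/2 * lam = lam * θ := by ring
  rw [smul_eq_mul, smul_eq_mul, he] at this
  exact this

lemma hoeffding_two_point (lam x y pp : ℝ) (hp0 : 0 ≤ pp) (hp1 : pp ≤ 1)
    (hxy : y ≤ x) (hxy1 : x ≤ y + 1) :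
    pp * Real.exp (-(lam * x)) + (1 - pp) * Real.exp (-(lam * y)) ≤
      Real.exp (lam^2/2 - lam * (pp * x + (1 - pp) * y)) := by
  set m := pp * x + (1 - pp) * y with hm
  have hα1 : -1 ≤ m - x := by nlinarith
  have hα2 : m - x ≤ 1 := by nlinarith
  have hβ1 : -1 ≤ m - y := by nlinarith
  have hβ2 : m - y ≤ 1 := by nlinarith
  have e1 : -(lam * x) = lam * (m - x) + -(lam * m) := by ring
  have e2 : -(lam * y) = lam * (m - y) + -(lam * m) := by ring
  rw [e1, e2, Real.exp_add, Real.exp_add]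
  have key : pp * Real.exp (lam * (m - x)) + (1 - pp) * Real.exp (lam * (m - y)) ≤
      Real.cosh lam := by
    have hz : pp * (m - x) + (1 - pp) * (m - y) = 0 := by rw [hm]; ring
    have hs : pp * ((1 - (m - x))/2 * Real.exp (-lam) + (1 + (m - x))/2 * Real.exp lam)
        + (1 - pp) * ((1 - (m - y))/2 * Real.exp (-lam) + (1 + (m - y))/2 * Real.exp lam)
        = Real.cosh lam := by
      rw [Real.cosh_eq]
      nlinarith [hz]
    have hc1 := chord_exp hα1 hα2 lam
    have hc2 := chord_exp hβ1 hβ2 lam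
    calc pp * Real.exp (lam * (m - x)) + (1 - pp) * Real.exp (lam * (m - y))
        ≤ pp * ((1 - (m - x))/2 * Real.exp (-lam) + (1 + (m - x))/2 * Real.exp lam)
          + (1 - pp) * ((1 - (m - y))/2 * Real.exp (-lam) + (1 + (m - y))/2 * Real.exp lam) := by
          exact add_le_add (mul_le_mul_of_nonneg_left hc1 hp0)
            (mul_le_mul_of_nonneg_left hc2 (by linarith))
      _ = Real.cosh lam := hs
  have hrw : pp * (Real.exp (lam * (m - x)) * Real.exp (-(lam * m)))
      + (1 - pp) * (Real.exp (lam * (m - y)) * Real.exp (-(lam * m)))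
      = (pp * Real.exp (lam * (m - x)) + (1 - pp) * Real.exp (lam * (m - y)))
        * Real.exp (-(lam * m)) := by ring
  rw [hrw]
  calc (pp * Real.exp (lam * (m - x)) + (1 - pp) * Real.exp (lam * (m - y))) * Real.exp (-(lam * m))
      ≤ Real.cosh lam * Real.exp (-(lam * m)) :=
        mul_le_mul_of_nonneg_right key (Real.exp_nonneg _)
    _ ≤ Real.exp (lam^2/2) * Real.exp (-(lam * m)) := by
        apply mul_le_mul_of_nonneg_right _ (Real.exp_nonneg _)
        simpa [pow_two] using Real.cosh_le_exp_half_sq lam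
    _ = Real.exp (lam^2/2 - lam * m) := by rw [← Real.exp_add]; ring_nf


lemma azuma_ind {n : ℕ} (p lam : ℝ) (hp0 : 0 ≤ p) (hp1 : p ≤ 1) (J : Finset (Fin n)) :
    ∀ f : Finset (Fin n) → ℝ,
      (∀ I j, 0 ≤ f I - f (insert j I) ∧ f I - f (insert j I) ≤ 1) →
      ∀ I₀ : Finset (Fin n),
      ∑ A ∈ J.powerset, (1-p)^A.card * p^(J.card - A.card) * Real.exp (-(lam * f (I₀ ∪ A)))
        ≤ Real.exp ((J.card : ℝ) * (lam^2/2)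
            - lam * ∑ A ∈ J.powerset, (1-p)^A.card * p^(J.card - A.card) * f (I₀ ∪ A)) := by
  induction J using Finset.induction_on with
  | empty =>
      intro f hf I₀
      simp
  | @insert a J ha IH =>
      intro f hf I₀
      have hcard : (insert a J).card = J.card + 1 := Finset.card_insert_of_notMem ha
      -- rewrite both sums via sum_powerset_insert
      have hsplit : ∀ g : Finset (Fin n) → ℝ,
          ∑ A ∈ (insert a J).powerset, (1-p)^A.card * p^((insert a J).card - A.card) * g (I₀ ∪ A)
          = ∑ A ∈ J.powerset, (1-p)^A.card * p^(J.card - A.card) *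
              (p * g (I₀ ∪ A) + (1-p) * g (insert a (I₀ ∪ A))) := by
        intro g
        rw [Finset.sum_powerset_insert ha]
        rw [← Finset.sum_add_distrib]
        apply Finset.sum_congr rfl
        intro A hA
        have hAJ : A ⊆ J := Finset.mem_powerset.1 hA
        have haA : a ∉ A := fun h => ha (hAJ h)
        have hAc : A.card ≤ J.card := Finset.card_le_card hAJ
        have h1 : (insert a J).card - A.card = (J.card - A.card) + 1 := by omega
        have h2 : (insert a A).card = A.card + 1 := Finset.card_insert_of_notMem haA
        have h4 : I₀ ∪ insert a A = insert a (I₀ ∪ A) := by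
          rw [Finset.union_insert]
        rw [h1, h2, h4, show (insert a J).card - (A.card + 1) = J.card - A.card by omega]
        ring
      have h₁ := hsplit (fun X => Real.exp (-(lam * f X)))
      rw [h₁, hsplit f]
      set F : Finset (Fin n) → ℝ := fun I => p * f I + (1-p) * f (insert a I) with hF
      have hFlip : ∀ I j, 0 ≤ F I - F (insert j I) ∧ F I - F (insert j I) ≤ 1 := by
        intro I j
        have h1 := hf I j
        have h2 := hf (insert a I) j
        have hcomm : insert a (insert j I) = insert j (insert a I) := Finset.insert_comm _ _ _
        constructor
        · simp only [hF, hcomm]; nlinarith [h1.1, h2.1]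
        · simp only [hF, hcomm]; nlinarith [h1.2, h2.2]
      have step : ∀ A ∈ J.powerset,
          (1-p)^A.card * p^(J.card - A.card) *
            (p * Real.exp (-(lam * f (I₀ ∪ A))) + (1-p) * Real.exp (-(lam * f (insert a (I₀ ∪ A)))))
          ≤ (1-p)^A.card * p^(J.card - A.card) *
            (Real.exp (lam^2/2) * Real.exp (-(lam * F (I₀ ∪ A)))) := by
        intro A hA
        apply mul_le_mul_of_nonneg_left _
          (mul_nonneg (pow_nonneg (by linarith) _) (pow_nonneg hp0 _))
        have h := hoeffding_two_point lam (f (I₀ ∪ A)) (f (insert a (I₀ ∪ A))) p hp0 hp1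
          (by linarith [(hf (I₀ ∪ A) a).1]) (by linarith [(hf (I₀ ∪ A) a).2])
        rw [← Real.exp_add]
        have he : lam^2/2 + -(lam * F (I₀ ∪ A))
            = lam^2/2 - lam * (p * f (I₀ ∪ A) + (1-p) * f (insert a (I₀ ∪ A))) := by
          simp only [hF]; ring
        rw [he]
        exact h
      calc ∑ A ∈ J.powerset, (1-p)^A.card * p^(J.card - A.card) *
            (p * Real.exp (-(lam * f (I₀ ∪ A))) + (1-p) * Real.exp (-(lam * f (insert a (I₀ ∪ A)))))
          ≤ ∑ A ∈ J.powerset, (1-p)^A.card * p^(J.card - A.card) *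
            (Real.exp (lam^2/2) * Real.exp (-(lam * F (I₀ ∪ A)))) := Finset.sum_le_sum step
        _ = Real.exp (lam^2/2) * ∑ A ∈ J.powerset, (1-p)^A.card * p^(J.card - A.card) *
              Real.exp (-(lam * F (I₀ ∪ A))) := by
            rw [Finset.mul_sum]; apply Finset.sum_congr rfl; intro A _; ring
        _ ≤ Real.exp (lam^2/2) * Real.exp ((J.card : ℝ) * (lam^2/2)
              - lam * ∑ A ∈ J.powerset, (1-p)^A.card * p^(J.card - A.card) * F (I₀ ∪ A)) := by
            apply mul_le_mul_of_nonneg_left (IH F hFlip I₀) (Real.exp_nonneg _)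
        _ = Real.exp (((insert a J).card : ℝ) * (lam^2/2)
              - lam * ∑ A ∈ J.powerset, (1-p)^A.card * p^(J.card - A.card) *
                (p * f (I₀ ∪ A) + (1-p) * f (insert a (I₀ ∪ A)))) := by
            rw [← Real.exp_add, hcard]
            congr 1
            push_cast
            ring


lemma prob_zero_le {n : ℕ} (hn : 0 < n) (p : ℝ) (hp0 : 0 ≤ p) (hp1 : p ≤ 1)
    (f : Finset (Fin n) → ℝ)
    (hf : ∀ I j, 0 ≤ f I - f (insert j I) ∧ f I - f (insert j I) ≤ 1)
    (μ : ℝ) (hμ : μ = ∑ I : Finset (Fin n), (1-p)^I.card * p^(n - I.card) * f I)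
    (hμpos : 0 < μ) :
    ∑ I ∈ Finset.univ.filter (fun I : Finset (Fin n) => f I ≤ 0),
        (1-p)^I.card * p^(n - I.card)
      ≤ Real.exp (-(μ^2/(2*n))) := by
  set lam : ℝ := μ / n with hlam
  have hlampos : 0 < lam := div_pos hμpos (by exact_mod_cast hn)
  have hw : ∀ I : Finset (Fin n), 0 ≤ (1-p)^I.card * p^(n - I.card) := fun I =>
    mul_nonneg (pow_nonneg (by linarith) _) (pow_nonneg hp0 _)
  have hsum : ∀ g : Finset (Fin n) → ℝ,
      ∑ A ∈ (Finset.univ : Finset (Fin n)).powerset,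
          (1-p)^A.card * p^((Finset.univ : Finset (Fin n)).card - A.card) * g ((∅ : Finset (Fin n)) ∪ A)
      = ∑ I : Finset (Fin n), (1-p)^I.card * p^(n - I.card) * g I := by
    intro g
    rw [Finset.powerset_univ]
    apply Finset.sum_congr rfl
    intro A _
    rw [Finset.empty_union, Finset.card_univ, Fintype.card_fin]
  have hazuma := azuma_ind p lam hp0 hp1 (Finset.univ : Finset (Fin n)) f hf ∅
  have h1 := hsum (fun I => Real.exp (-(lam * f I)))
  rw [h1] at hazuma
  have hcard : ((Finset.univ : Finset (Fin n)).card : ℝ) = n := by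
    rw [Finset.card_univ, Fintype.card_fin]
  rw [hsum f, hcard, ← hμ] at hazuma
  calc ∑ I ∈ Finset.univ.filter (fun I : Finset (Fin n) => f I ≤ 0),
        (1-p)^I.card * p^(n - I.card)
      ≤ ∑ I ∈ Finset.univ.filter (fun I : Finset (Fin n) => f I ≤ 0),
        (1-p)^I.card * p^(n - I.card) * Real.exp (-(lam * f I)) := by
        apply Finset.sum_le_sum
        intro I hI
        have hfI : f I ≤ 0 := (Finset.mem_filter.1 hI).2
        nth_rewrite 1 [← mul_one ((1-p)^I.card * p^(n - I.card))]
        apply mul_le_mul_of_nonneg_left _ (hw I)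
        rw [← Real.exp_zero]
        apply Real.exp_le_exp.2
        nlinarith
    _ ≤ ∑ I : Finset (Fin n), (1-p)^I.card * p^(n - I.card) * Real.exp (-(lam * f I)) := by
        apply Finset.sum_le_sum_of_subset_of_nonneg (Finset.filter_subset _ _)
        intro I _ _
        exact mul_nonneg (hw I) (Real.exp_nonneg _)
    _ ≤ Real.exp ((n : ℝ) * (lam^2/2) - lam * μ) := hazuma
    _ = Real.exp (-(μ^2/(2*n))) := by
        congr 1
        rw [hlam]
        field_simp
        ring


variable {k n : ℕ} (G : Matrix (Fin k) (Fin n) (ZMod 2))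

def kerCount (I : Finset (Fin n)) : ℕ :=
  (univ.filter (fun c : Fin k → ZMod 2 => ∀ j ∈ I, Matrix.vecMul c G j = 0)).card

lemma kerCount_pos (I : Finset (Fin n)) : 1 ≤ kerCount G I := by
  rw [kerCount]
  exact Finset.card_pos.2 ⟨0, Finset.mem_filter.2 ⟨Finset.mem_univ _, fun j _ => by
    rw [Matrix.zero_vecMul]; rfl⟩⟩

lemma kerCount_insert_le (I : Finset (Fin n)) (j : Fin n) :
    kerCount G (insert j I) ≤ kerCount G I := by
  apply Finset.card_le_card
  apply Finset.monotone_filter_right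
  intro c _ hc j' hj'
  exact hc j' (Finset.mem_insert_of_mem hj')

lemma zmod2_ne_zero : ∀ a : ZMod 2, a ≠ 0 → a = 1 := by decide

lemma kerCount_le_two_mul (I : Finset (Fin n)) (j : Fin n) :
    kerCount G I ≤ 2 * kerCount G (insert j I) := by
  classical
  set S := univ.filter (fun c : Fin k → ZMod 2 => ∀ j' ∈ I, Matrix.vecMul c G j' = 0) with hS
  set T := univ.filter
    (fun c : Fin k → ZMod 2 => ∀ j' ∈ insert j I, Matrix.vecMul c G j' = 0) with hT
  by_cases hall : ∀ c ∈ S, Matrix.vecMul c G j = 0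
  · have hsub : S ⊆ T := by
      intro c hc
      have hcS := (Finset.mem_filter.1 hc).2
      exact Finset.mem_filter.2 ⟨Finset.mem_univ _, fun j' hj' => by
        rcases Finset.mem_insert.1 hj' with h | h
        · rw [h]; exact hall c hc
        · exact hcS j' h⟩
    calc kerCount G I = S.card := rfl
      _ ≤ T.card := Finset.card_le_card hsub
      _ ≤ 2 * T.card := by omega
  · push_neg at hall
    obtain ⟨c₀, hc₀S, hc₀j⟩ := hall
    have hc₀mem := (Finset.mem_filter.1 hc₀S).2
    set φ : (Fin k → ZMod 2) → (Fin k → ZMod 2) :=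
      fun c => if Matrix.vecMul c G j = 0 then c else c + c₀ with hφ
    have hmaps : ∀ c ∈ S, φ c ∈ T := by
      intro c hc
      have hcS := (Finset.mem_filter.1 hc).2
      by_cases h : Matrix.vecMul c G j = 0
      · refine Finset.mem_filter.2 ⟨Finset.mem_univ _, fun j' hj' => ?_⟩
        simp only [hφ, if_pos h]
        rcases Finset.mem_insert.1 hj' with h' | h'
        · rw [h']; exact h
        · exact hcS j' h'
      · refine Finset.mem_filter.2 ⟨Finset.mem_univ _, fun j' hj' => ?_⟩
        simp only [hφ, if_neg h]
        rw [Matrix.add_vecMul]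
        rcases Finset.mem_insert.1 hj' with h' | h'
        · subst h'
          have h1 := zmod2_ne_zero _ h
          have h2 := zmod2_ne_zero _ hc₀j
          show Matrix.vecMul c G j' + Matrix.vecMul c₀ G j' = 0
          rw [h1, h2]; decide
        · show Matrix.vecMul c G j' + Matrix.vecMul c₀ G j' = 0
          rw [hcS j' h', hc₀mem j' h', add_zero]
    have hfiber : ∀ a ∈ T, (S.filter (fun c => φ c = a)).card ≤ 2 := by
      intro a _
      have hsub2 : S.filter (fun c => φ c = a) ⊆ {a, a - c₀} := by
        intro c hc
        have hφc := (Finset.mem_filter.1 hc).2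
        simp only [hφ] at hφc
        by_cases h : Matrix.vecMul c G j = 0
        · rw [if_pos h] at hφc
          exact Finset.mem_insert.2 (Or.inl hφc)
        · rw [if_neg h] at hφc
          refine Finset.mem_insert.2 (Or.inr (Finset.mem_singleton.2 ?_))
          rw [← hφc]; abel
      calc (S.filter (fun c => φ c = a)).card ≤ ({a, a - c₀} : Finset _).card :=
            Finset.card_le_card hsub2
        _ ≤ 2 := Finset.card_insert_le _ _ |>.trans (by simp)
    calc kerCount G I = S.card := rfl
      _ ≤ 2 * T.card := Finset.card_le_mul_card_image_of_maps_to hmaps 2 hfiber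
      _ = 2 * kerCount G (insert j I) := rfl

open Classical in
lemma two_pow_le_kerCount (I : Finset (Fin n)) :
    2 ^ (univ.filter (fun i : Fin k => ∀ j ∈ I, G i j = 0)).card ≤ kerCount G I := by
  classical
  set E := univ.filter (fun i : Fin k => ∀ j ∈ I, G i j = 0) with hE
  set P := Fintype.piFinset (fun i : Fin k =>
    if i ∈ E then (univ : Finset (ZMod 2)) else ({0} : Finset (ZMod 2))) with hP
  have hcardP : P.card = 2 ^ E.card := by
    rw [hP, Fintype.card_piFinset]
    have : ∀ i : Fin k, (if i ∈ E then (univ : Finset (ZMod 2)) else ({0} : Finset (ZMod 2))).card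
        = if i ∈ E then 2 else 1 := by
      intro i; by_cases h : i ∈ E <;> simp [h]
    rw [Finset.prod_congr rfl (fun i _ => this i)]
    rw [Finset.prod_ite, Finset.prod_const, Finset.prod_const]
    simp [Finset.filter_mem_eq_inter]
  have hsub : P ⊆ univ.filter (fun c : Fin k → ZMod 2 => ∀ j ∈ I, Matrix.vecMul c G j = 0) := by
    intro c hc
    rw [Fintype.mem_piFinset] at hc
    refine Finset.mem_filter.2 ⟨Finset.mem_univ _, fun j hj => ?_⟩
    show (Matrix.vecMul c G) j = 0
    rw [Matrix.vecMul]
    rw [dotProduct]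
    apply Finset.sum_eq_zero
    intro i _
    by_cases h : i ∈ E
    · have : G i j = 0 := (Finset.mem_filter.1 h).2 j hj
      rw [this, mul_zero]
    · have := hc i
      rw [if_neg h, Finset.mem_singleton] at this
      rw [this, zero_mul]
  calc 2 ^ E.card = P.card := hcardP.symm
    _ ≤ _ := Finset.card_le_card hsub

lemma exists_nonzero_of_two_le (I : Finset (Fin n)) (h : 2 ≤ kerCount G I) :
    ∃ c : Fin k → ZMod 2, c ≠ 0 ∧ ∀ j ∈ I, Matrix.vecMul c G j = 0 := by
  classical
  by_contra hcon
  push_neg at hcon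
  have hsub : univ.filter (fun c : Fin k → ZMod 2 => ∀ j ∈ I, Matrix.vecMul c G j = 0)
      ⊆ {0} := by
    intro c hc
    rcases eq_or_ne c 0 with h0 | h0
    · simp [h0]
    · obtain ⟨j, hj, hne⟩ := hcon c h0
      exact absurd ((Finset.mem_filter.1 hc).2 j hj) hne
  have := Finset.card_le_card hsub
  simp at this
  rw [kerCount] at h
  omega


lemma binom_sum {α : Type*} [DecidableEq α] (x y : ℝ) (B : Finset α) :
    ∑ I ∈ B.powerset, x^I.card * y^(B.card - I.card) = (x+y)^B.card := by
  have h := Finset.prod_add (fun _ : α => x) (fun _ : α => y) B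
  rw [Finset.prod_const] at h
  rw [h]
  apply Finset.sum_congr rfl
  intro I hI
  have hIB : I ⊆ B := Finset.mem_powerset.1 hI
  rw [Finset.prod_const, Finset.prod_const, Finset.card_sdiff_of_subset hIB]

lemma total_mass {n : ℕ} (p : ℝ) :
    ∑ I : Finset (Fin n), (1-p)^I.card * p^(n - I.card) = 1 := by
  calc ∑ I : Finset (Fin n), (1-p)^I.card * p^(n - I.card)
      = ∑ I ∈ (univ : Finset (Fin n)).powerset,
          (1-p)^I.card * p^((univ : Finset (Fin n)).card - I.card) := by
        rw [Finset.powerset_univ]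
        apply Finset.sum_congr rfl
        intro I _
        rw [Finset.card_univ, Fintype.card_fin]
    _ = ((1-p) + p)^(univ : Finset (Fin n)).card := binom_sum _ _ _
    _ = 1 := by rw [show (1-p) + p = 1 by ring, one_pow]

lemma prob_avoid {n : ℕ} (p : ℝ) (S : Finset (Fin n)) :
    ∑ I ∈ univ.filter (fun I : Finset (Fin n) => ∀ j ∈ I, j ∉ S),
      (1-p)^I.card * p^(n - I.card) = p^(S.card) := by
  have hset : univ.filter (fun I : Finset (Fin n) => ∀ j ∈ I, j ∉ S) = Sᶜ.powerset := by
    ext I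
    simp only [Finset.mem_filter, Finset.mem_univ, true_and, Finset.mem_powerset]
    constructor
    · intro h j hj
      exact Finset.mem_compl.2 (h j hj)
    · intro h j hj
      exact Finset.mem_compl.1 (h hj)
  rw [hset]
  have hcard : Sᶜ.card = n - S.card := by
    rw [Finset.card_compl, Fintype.card_fin]
  have hSn : S.card ≤ n := by
    simpa using Finset.card_le_card (Finset.subset_univ S)
  have key : ∀ I ∈ Sᶜ.powerset,
      (1-p)^I.card * p^(n - I.card) = p^(S.card) * ((1-p)^I.card * p^(Sᶜ.card - I.card)) := by
    intro I hI
    have hIc : I.card ≤ Sᶜ.card := Finset.card_le_card (Finset.mem_powerset.1 hI)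
    have : n - I.card = S.card + (Sᶜ.card - I.card) := by omega
    rw [this, pow_add]
    ring
  rw [Finset.sum_congr rfl key, ← Finset.mul_sum]
  rw [binom_sum (1-p) p Sᶜ, show (1-p) + p = 1 by ring, one_pow, mul_one]

lemma pairing_bound {k n : ℕ} (hk : 1 ≤ k) (G : Matrix (Fin k) (Fin n) (ZMod 2))
    (ψ : (I : Finset (Fin n)) → (↥I → ZMod 2) → (Fin k → ZMod 2))
    (I : Finset (Fin n)) (c : Fin k → ZMod 2) (hc : c ≠ 0)
    (hker : ∀ j ∈ I, Matrix.vecMul c G j = 0) :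
    (2:ℝ)^(k-1) ≤ ∑ x : Fin k → ZMod 2,
      (if ψ I (fun j => Matrix.vecMul x G (j : Fin n)) ≠ x then (1:ℝ) else 0) := by
  classical
  set obs : (Fin k → ZMod 2) → (↥I → ZMod 2) :=
    fun x => fun j => Matrix.vecMul x G (j : Fin n) with hobs
  have hobs_add : ∀ x : Fin k → ZMod 2, obs (x + c) = obs x := by
    intro x
    funext j
    simp only [hobs]
    rw [Matrix.add_vecMul]
    show Matrix.vecMul x G j + Matrix.vecMul c G j = _
    rw [hker j j.2, add_zero]
  set Cor := univ.filter (fun x : Fin k → ZMod 2 => ψ I (obs x) = x) with hCor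
  set Wrong := univ.filter (fun x : Fin k → ZMod 2 => ¬(ψ I (obs x) = x)) with hWrong
  have hsum : ∑ x : Fin k → ZMod 2,
      (if ψ I (fun j => Matrix.vecMul x G (j : Fin n)) ≠ x then (1:ℝ) else 0)
      = (Wrong.card : ℝ) := by
    rw [hWrong, Finset.card_filter]
    push_cast
    apply Finset.sum_congr rfl
    intro x _
    rfl
  rw [hsum]
  have hcardfun : Fintype.card (Fin k → ZMod 2) = 2^k := by
    rw [Fintype.card_fun, ZMod.card, Fintype.card_fin]
  have hdisj : Disjoint Cor (Cor.image (fun x => x + c)) := by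
    rw [Finset.disjoint_left]
    intro y hy hyim
    obtain ⟨x, hx, hxy⟩ := Finset.mem_image.1 hyim
    have h1 : ψ I (obs y) = y := (Finset.mem_filter.1 hy).2
    have h2 : ψ I (obs x) = x := (Finset.mem_filter.1 hx).2
    rw [← hxy] at h1
    rw [hobs_add] at h1
    rw [h2] at h1
    exact hc (add_left_cancel
      (show x + (0 : Fin k → ZMod 2) = x + c by rw [add_zero]; exact h1)).symm
  have himcard : (Cor.image (fun x => x + c)).card = Cor.card :=
    Finset.card_image_of_injective _ (fun a b h => by
      have := congrArg (fun z => z - c) h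
      simpa using this)
  have hunion : (Cor ∪ Cor.image (fun x => x + c)).card ≤ 2^k := by
    rw [← hcardfun]
    exact (Finset.card_le_card (Finset.subset_univ _)).trans_eq (Finset.card_univ)
  rw [Finset.card_union_of_disjoint hdisj, himcard] at hunion
  have hCW : Cor.card + Wrong.card = 2^k := by
    rw [hCor, hWrong, ← hcardfun]
    rw [Finset.card_filter_add_card_filter_not]
    exact Finset.card_univ
  have hWge : 2^(k-1) ≤ Wrong.card := by
    have h2k : 2^k = 2 * 2^(k-1) := by
      obtain ⟨m, hm⟩ : ∃ m, k = m + 1 := ⟨k-1, by omega⟩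
      subst hm
      simp [pow_succ, mul_comm]
    omega
  calc (2:ℝ)^(k-1) = ((2^(k-1) : ℕ) : ℝ) := by push_cast; ring
    _ ≤ (Wrong.card : ℝ) := by exact_mod_cast hWge



/-- a linear code over BEC(p) whose generator matrix `G` has all row weights
at most `t` with `t < ln(k²/(2n ln(1/ε))) / (2 ln(1/p))` has average error probability at
least `1/2 − ε` under any decoder (which observes the set `I` of unerased coordinates and
the codeword restricted to `I`). -/
theorem stmt_8 {k n t : ℕ} (hk : 1 ≤ k) (p ε : ℝ) (hp0 : 0 < p) (hp1 : p < 1)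
    (hε0 : 0 < ε) (hε1 : ε < 1)
    (G : Matrix (Fin k) (Fin n) (ZMod 2))
    (hrow : ∀ i, hammingNorm (G i) ≤ t)
    (ht : (t : ℝ) <
      Real.log ((k : ℝ) ^ 2 / (2 * n * Real.log (1 / ε))) / (2 * Real.log (1 / p)))
    (ψ : (I : Finset (Fin n)) → (↥I → ZMod 2) → (Fin k → ZMod 2)) :
    1 / 2 - ε ≤
      (2 : ℝ) ^ (-(k : ℝ)) * ∑ x : Fin k → ZMod 2,
        ∑ I : Finset (Fin n), ((1 - p) ^ I.card * p ^ (n - I.card)) *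
          (if ψ I (fun j => Matrix.vecMul x G (j : Fin n)) ≠ x then 1 else 0) := by
  classical
  -- basic positivity facts
  have hk0 : (0:ℝ) < k := by exact_mod_cast hk
  have hL : (0:ℝ) < Real.log (1/ε) := by
    apply Real.log_pos
    rw [lt_div_iff₀ hε0]
    linarith
  have hlogp : (0:ℝ) < Real.log (1/p) := by
    apply Real.log_pos
    rw [lt_div_iff₀ hp0]
    linarith
  -- n must be positive
  rcases Nat.eq_zero_or_pos n with hn0 | hnpos
  · exfalso
    subst hn0
    rw [show ((0:ℕ):ℝ) = 0 by norm_num] at ht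
    rw [mul_zero, zero_mul, div_zero, Real.log_zero, zero_div] at ht
    exact absurd ht (not_lt.2 (Nat.cast_nonneg t))
  have hn0R : (0:ℝ) < n := by exact_mod_cast hnpos
  -- extract the main quantitative consequence of ht
  set L : ℝ := Real.log (1/ε) with hLdef
  have hA : (0:ℝ) < (k:ℝ)^2 / (2 * n * L) := by positivity
  have hA1 : (t:ℝ) * (2 * Real.log (1/p)) < Real.log ((k:ℝ)^2 / (2 * n * L)) :=
    (lt_div_iff₀ (by positivity)).1 ht
  have hlogpow : Real.log ((1/p)^(2*t)) = (t:ℝ) * (2 * Real.log (1/p)) := by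
    rw [Real.log_pow]
    push_cast
    ring
  have hltlog : Real.log ((1/p)^(2*t)) < Real.log ((k:ℝ)^2 / (2 * n * L)) := by
    rw [hlogpow]; exact hA1
  have hppow : (0:ℝ) < (1/p)^(2*t) := by positivity
  have hlt : (1/p)^(2*t) < (k:ℝ)^2 / (2 * n * L) := by
    calc (1/p)^(2*t) = Real.exp (Real.log ((1/p)^(2*t))) := (Real.exp_log hppow).symm
      _ < Real.exp (Real.log ((k:ℝ)^2 / (2 * n * L))) := Real.exp_lt_exp.2 hltlog
      _ = (k:ℝ)^2 / (2 * n * L) := Real.exp_log hA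
  have hq : (0:ℝ) < p^(2*t) := by positivity
  have h2nL : 2 * n * L < (k:ℝ)^2 * p^(2*t) := by
    rw [one_div, inv_pow, ← one_div] at hlt
    have := (div_lt_div_iff₀ hq (by positivity)).1 hlt
    linarith
  -- μ₀
  set μ₀ : ℝ := k * p^t with hμ₀def
  have hμ₀pos : 0 < μ₀ := by positivity
  have hμ₀sq : μ₀^2 = (k:ℝ)^2 * p^(2*t) := by
    rw [hμ₀def, mul_pow, ← pow_mul, mul_comm t 2]
  -- the kernel-size function
  set f : Finset (Fin n) → ℝ := fun I => Real.logb 2 (kerCount G I) with hfdef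
  have hker1 : ∀ I : Finset (Fin n), (1:ℝ) ≤ (kerCount G I : ℝ) := by
    intro I; exact_mod_cast kerCount_pos G I
  have hlip : ∀ (I : Finset (Fin n)) (j : Fin n),
      0 ≤ f I - f (insert j I) ∧ f I - f (insert j I) ≤ 1 := by
    intro I j
    have h1 : (1:ℝ) ≤ (kerCount G (insert j I) : ℝ) := hker1 _
    have h2 : (kerCount G (insert j I) : ℝ) ≤ (kerCount G I : ℝ) := by
      exact_mod_cast kerCount_insert_le G I j
    have h3 : (kerCount G I : ℝ) ≤ 2 * (kerCount G (insert j I) : ℝ) := by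
      exact_mod_cast kerCount_le_two_mul G I j
    constructor
    · have := Real.logb_le_logb_of_le (b := 2) (by norm_num) (by linarith) h2
      simp only [hfdef]
      linarith [this]
    · have hle : Real.logb 2 (kerCount G I : ℝ) ≤
          Real.logb 2 (2 * (kerCount G (insert j I) : ℝ)) :=
        Real.logb_le_logb_of_le (by norm_num) (by linarith) h3
      rw [Real.logb_mul (by norm_num) (by linarith),
        Real.logb_self_eq_one (by norm_num)] at hle
      simp only [hfdef]
      linarith
  -- f dominates the number of fully erased rows
  have hfZ : ∀ I : Finset (Fin n),
      (((univ.filter (fun i : Fin k => ∀ j ∈ I, G i j = 0)).card : ℝ)) ≤ f I := by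
    intro I
    set Z := (univ.filter (fun i : Fin k => ∀ j ∈ I, G i j = 0)).card with hZ
    have h1 : ((2:ℕ)^Z : ℝ) ≤ (kerCount G I : ℝ) := by
      exact_mod_cast two_pow_le_kerCount G I
    have h2 : Real.logb 2 ((2:ℕ)^Z : ℝ) ≤ Real.logb 2 (kerCount G I : ℝ) :=
      Real.logb_le_logb_of_le (by norm_num) (by positivity) h1
    have h3 : Real.logb 2 ((2:ℕ)^Z : ℝ) = Z := by
      push_cast
      rw [Real.logb_pow, Real.logb_self_eq_one (by norm_num), mul_one]
    simp only [hfdef]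
    rw [← h3]
    exact h2
  -- expectation of f is at least μ₀
  set μ : ℝ := ∑ I : Finset (Fin n), (1-p)^I.card * p^(n - I.card) * f I with hμdef
  have hw : ∀ I : Finset (Fin n), (0:ℝ) ≤ (1-p)^I.card * p^(n - I.card) := fun I =>
    mul_nonneg (pow_nonneg (by linarith) _) (pow_nonneg hp0.le _)
  have hEZ : ∑ I : Finset (Fin n), (1-p)^I.card * p^(n - I.card) *
      (((univ.filter (fun i : Fin k => ∀ j ∈ I, G i j = 0)).card : ℝ)) = 
      ∑ i : Fin k, p ^ ((univ.filter (fun j : Fin n => G i j ≠ 0)).card) := by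
    have hcast : ∀ I : Finset (Fin n),
        (((univ.filter (fun i : Fin k => ∀ j ∈ I, G i j = 0)).card : ℝ))
        = ∑ i : Fin k, (if (∀ j ∈ I, G i j = 0) then (1:ℝ) else 0) := by
      intro I
      rw [Finset.card_filter]
      push_cast
      rfl
    calc ∑ I : Finset (Fin n), (1-p)^I.card * p^(n - I.card) *
          (((univ.filter (fun i : Fin k => ∀ j ∈ I, G i j = 0)).card : ℝ))
        = ∑ I : Finset (Fin n), ∑ i : Fin k,
            (1-p)^I.card * p^(n - I.card) * (if (∀ j ∈ I, G i j = 0) then (1:ℝ) else 0) := by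
          apply Finset.sum_congr rfl
          intro I _
          rw [hcast I, Finset.mul_sum]
      _ = ∑ i : Fin k, ∑ I : Finset (Fin n),
            (1-p)^I.card * p^(n - I.card) * (if (∀ j ∈ I, G i j = 0) then (1:ℝ) else 0) :=
          Finset.sum_comm
      _ = ∑ i : Fin k, p ^ ((univ.filter (fun j : Fin n => G i j ≠ 0)).card) := by
          apply Finset.sum_congr rfl
          intro i _
          have hpred : ∀ I : Finset (Fin n),
              (∀ j ∈ I, G i j = 0) ↔ (∀ j ∈ I, j ∉ univ.filter (fun j : Fin n => G i j ≠ 0)) := by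
            intro I
            constructor
            · intro h j hj hmem
              exact (Finset.mem_filter.1 hmem).2 (h j hj)
            · intro h j hj
              by_contra hne
              exact h j hj (Finset.mem_filter.2 ⟨Finset.mem_univ _, hne⟩)
          rw [← prob_avoid p (univ.filter (fun j : Fin n => G i j ≠ 0))]
          rw [Finset.sum_filter]
          apply Finset.sum_congr rfl
          intro I _
          by_cases h : ∀ j ∈ I, G i j = 0
          · rw [if_pos h, if_pos ((hpred I).1 h), mul_one]
          · rw [if_neg h, if_neg (fun hh => h ((hpred I).2 hh)), mul_zero]
  have hnorm_card : ∀ i : Fin k, (univ.filter (fun j : Fin n => G i j ≠ 0)).card ≤ t := by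
    intro i
    have : (univ.filter (fun j : Fin n => G i j ≠ 0)).card = hammingNorm (G i) := rfl
    rw [this]
    exact hrow i
  have hμ₀le : μ₀ ≤ μ := by
    have step1 : ∑ i : Fin k, p ^ ((univ.filter (fun j : Fin n => G i j ≠ 0)).card)
        ≥ ∑ i : Fin k, p ^ t := by
      apply Finset.sum_le_sum
      intro i _
      exact pow_le_pow_of_le_one hp0.le hp1.le (hnorm_card i)
    have step2 : μ ≥ ∑ I : Finset (Fin n), (1-p)^I.card * p^(n - I.card) *
        (((univ.filter (fun i : Fin k => ∀ j ∈ I, G i j = 0)).card : ℝ)) := by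
      apply Finset.sum_le_sum
      intro I _
      exact mul_le_mul_of_nonneg_left (hfZ I) (hw I)
    rw [hEZ] at step2
    have : ∑ i : Fin k, (p:ℝ) ^ t = k * p ^ t := by
      rw [Finset.sum_const, Finset.card_univ, Fintype.card_fin, nsmul_eq_mul]
    rw [hμ₀def]
    rw [this] at step1
    linarith
  have hμpos : 0 < μ := lt_of_lt_of_le hμ₀pos hμ₀le
  -- apply the Azuma bound
  have hgood := prob_zero_le hnpos p hp0.le hp1.le f hlip μ hμdef hμpos
  have hexp2 : Real.exp (-(μ^2/(2*n))) ≤ Real.exp (-(μ₀^2/(2*n))) := by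
    apply Real.exp_le_exp.2
    have hsq : μ₀^2 ≤ μ^2 := by nlinarith
    have h2n : (0:ℝ) < 2*n := by linarith
    rw [neg_le_neg_iff]
    exact div_le_div_of_nonneg_right hsq h2n.le
  have hfinal_eps : Real.exp (-(μ₀^2/(2*n))) < ε := by
    have h1 : -(μ₀^2/(2*n)) < -L := by
      rw [neg_lt_neg_iff, lt_div_iff₀ (by linarith : (0:ℝ) < 2*n), hμ₀sq]
      have : L * (2*(n:ℝ)) = 2*n*L := by ring
      linarith [h2nL]
    calc Real.exp (-(μ₀^2/(2*n))) < Real.exp (-L) := Real.exp_lt_exp.2 h1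
      _ = ε := by rw [hLdef, one_div, Real.log_inv, neg_neg, Real.exp_log hε0]
  -- decoder part
  set T : Finset (Fin n) → ℝ := fun I => ∑ x : Fin k → ZMod 2,
    (if ψ I (fun j => Matrix.vecMul x G (j : Fin n)) ≠ x then (1:ℝ) else 0) with hTdef
  have hTnonneg : ∀ I, 0 ≤ T I := by
    intro I
    apply Finset.sum_nonneg
    intro x _
    split <;> norm_num
  have hswap : ∑ x : Fin k → ZMod 2, ∑ I : Finset (Fin n), (1-p)^I.card * p^(n-I.card) *
      (if ψ I (fun j => Matrix.vecMul x G (j : Fin n)) ≠ x then (1:ℝ) else 0)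
      = ∑ I : Finset (Fin n), (1-p)^I.card * p^(n-I.card) * T I := by
    rw [Finset.sum_comm]
    apply Finset.sum_congr rfl
    intro I _
    rw [hTdef, Finset.mul_sum]
  set Bad := univ.filter (fun I : Finset (Fin n) => ¬ (f I ≤ 0)) with hBad
  have hTbad : ∀ I ∈ Bad, (2:ℝ)^(k-1) ≤ T I := by
    intro I hI
    have hfI : ¬ (f I ≤ 0) := (Finset.mem_filter.1 hI).2
    have hker2 : 2 ≤ kerCount G I := by
      by_contra h
      have h1 : kerCount G I = 1 := by have := kerCount_pos G I; omega
      apply hfI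
      simp only [hfdef, h1]
      norm_num
    obtain ⟨c, hc0, hcker⟩ := exists_nonzero_of_two_le G I hker2
    exact pairing_bound hk G ψ I c hc0 hcker
  have hbadmass : 1 - ε ≤ ∑ I ∈ Bad, (1-p)^I.card * p^(n-I.card) := by
    have hsplit := Finset.sum_filter_add_sum_filter_not univ
      (fun I : Finset (Fin n) => f I ≤ 0) (fun I => (1-p)^I.card * p^(n-I.card))
    have htot := total_mass (n := n) p
    have hgle : ∑ I ∈ univ.filter (fun I : Finset (Fin n) => f I ≤ 0),
        (1-p)^I.card * p^(n-I.card) ≤ ε :=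
      le_of_lt (lt_of_le_of_lt (hgood.trans hexp2) hfinal_eps)
    rw [hBad]
    linarith [hsplit, htot, hgle]
  have hchain : (2:ℝ)^(k-1) * (1-ε) ≤
      ∑ I : Finset (Fin n), (1-p)^I.card * p^(n-I.card) * T I := by
    calc (2:ℝ)^(k-1) * (1-ε)
        ≤ (2:ℝ)^(k-1) * ∑ I ∈ Bad, (1-p)^I.card * p^(n-I.card) :=
          mul_le_mul_of_nonneg_left hbadmass (by positivity)
      _ = ∑ I ∈ Bad, (1-p)^I.card * p^(n-I.card) * (2:ℝ)^(k-1) := by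
          rw [Finset.mul_sum]
          apply Finset.sum_congr rfl
          intro I _
          ring
      _ ≤ ∑ I ∈ Bad, (1-p)^I.card * p^(n-I.card) * T I := by
          apply Finset.sum_le_sum
          intro I hI
          exact mul_le_mul_of_nonneg_left (hTbad I hI) (hw I)
      _ ≤ ∑ I : Finset (Fin n), (1-p)^I.card * p^(n-I.card) * T I := by
          apply Finset.sum_le_sum_of_subset_of_nonneg (Finset.filter_subset _ _)
          intro I _ _
          exact mul_nonneg (hw I) (hTnonneg I)
  rw [hswap]
  have h2k : (2:ℝ)^(-(k:ℝ)) = ((2:ℝ)^(k:ℕ))⁻¹ := by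
    rw [Real.rpow_neg (by norm_num), Real.rpow_natCast]
  rw [h2k]
  have hkk : (2:ℝ)^(k:ℕ) = 2 * (2:ℝ)^(k-1) := by
    obtain ⟨m, hm⟩ : ∃ m, k = m + 1 := ⟨k-1, by omega⟩
    subst hm
    simp only [Nat.add_sub_cancel, pow_succ]
    ring
  calc 1/2 - ε ≤ (1 - ε)/2 := by linarith
    _ = ((2:ℝ)^(k:ℕ))⁻¹ * ((2:ℝ)^(k-1) * (1-ε)) := by
        rw [hkk]
        have hpos : (0:ℝ) < (2:ℝ)^(k-1) := by positivity
        field_simp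
    _ ≤ ((2:ℝ)^(k:ℕ))⁻¹ * (∑ I : Finset (Fin n), (1-p)^I.card * p^(n-I.card) * T I) :=
        mul_le_mul_of_nonneg_left hchain (by positivity)
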